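/- arXiv:1906.08216 — 2 statements merged into one kernel-verified Lean document; each statement's English description precedes it below -/
import Mathlib

section
/- Let m, n be positive integers with gcd(m,n)=1 and let α be a weak composition of m into n parts. For 1 ≤ r ≤ n define z_r := Σ_{j=1}^n j·α_{j+r}, indices taken modulo n. Then in the polynomial ring ℤ[q], Σ_{r=1}^n q^{z_r} ≡ 1 + q + q² + ⋯ + q^{n−1} (mod q^n − 1). -/
open Finset Polynomial

/-- The cells of the skew shape `λ/μ`. -/
def skewCells (lam mu : YoungDiagram) : Finset (ℕ × ℕ) :=
  lam.cells \ mu.cells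

/-- A semistandard Young tableau of skew shape `λ/μ`: a filling of the cells of `λ/μ`
with positive integers, weakly increasing along rows and strictly increasing down columns.
Cells outside the shape carry the value `0`. -/
structure SkewSSYT (lam mu : YoungDiagram) where
  entry : ℕ → ℕ → ℕ
  pos' : ∀ i j, (i, j) ∈ skewCells lam mu → 0 < entry i j
  zeros' : ∀ i j, (i, j) ∉ skewCells lam mu → entry i j = 0
  row_weak' : ∀ i j1 j2, j1 < j2 → (i, j1) ∈ skewCells lam mu →
    (i, j2) ∈ skewCells lam mu → entry i j1 ≤ entry i j2
  col_strict' : ∀ i1 i2 j, i1 < i2 → (i1, j) ∈ skewCells lam mu →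
    (i2, j) ∈ skewCells lam mu → entry i1 j < entry i2 j

/-- `w_k(T)`: the number of entries of `T` equal to `k`. -/
def SkewSSYT.wt {lam mu : YoungDiagram} (T : SkewSSYT lam mu) (k : ℕ) : ℕ :=
  ((skewCells lam mu).filter fun c => T.entry c.1 c.2 = k).card

/-- `SSYT(λ/μ, n)`: semistandard skew tableaux of shape `λ/μ` with all entries at most `n`. -/
def SSYTbdd (lam mu : YoungDiagram) (n : ℕ) : Set (SkewSSYT lam mu) :=
  {T | ∀ i j, (i, j) ∈ skewCells lam mu → T.entry i j ≤ n}

/-- `SSYT(λ/μ, α)`: semistandard skew tableaux of shape `λ/μ` with exactly `α i`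
entries equal to `i + 1` for each `i : Fin n` (so content `α`, entries in `{1, …, n}`). -/
def SSYTcontent (lam mu : YoungDiagram) {n : ℕ} (α : Fin n → ℕ) : Set (SkewSSYT lam mu) :=
  {T | (∀ i : Fin n, T.wt ((i : ℕ) + 1) = α i) ∧
    ∀ i j, (i, j) ∈ skewCells lam mu → T.entry i j ≤ n}

/-- The cyclic shift `cyc_r(α)`, with `cyc r α i = α ((i + r) mod n)`. -/
def cyc {n : ℕ} (r : ℕ) (α : Fin n → ℕ) : Fin n → ℕ :=
  fun i => α ⟨((i : ℕ) + r) % n, Nat.mod_lt _ i.pos⟩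

/-- `z_r = Σ_j j ⬝ α_{j+r}` (indices mod `n`): the weighted sum of the shifted composition. -/
def zwt {n : ℕ} (α : Fin n → ℕ) (r : ℕ) : ℕ :=
  ∑ j : Fin n, ((j : ℕ) + 1) * cyc r α j

/-- `Σ_{j=1}^n j ⬝ w_j(T)`. -/
def weightedSum {lam mu : YoungDiagram} (n : ℕ) (T : SkewSSYT lam mu) : ℕ :=
  ∑ j : Fin n, ((j : ℕ) + 1) * T.wt ((j : ℕ) + 1)

/-- The (skew) Schur polynomial `s_{λ/μ}(x_1, …, x_n)` evaluated at `x`. -/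
noncomputable def skewSchurEval (lam mu : YoungDiagram) (n : ℕ) {R : Type*} [CommSemiring R]
    (x : Fin n → R) : R :=
  ∑ᶠ T ∈ SSYTbdd lam mu n, ∏ i : Fin n, x i ^ T.wt ((i : ℕ) + 1)

/-- `n(λ) = Σ_j (j - 1) λ_j`, i.e. the sum of the (0-indexed) row indices of the cells. -/
def nStat (lam : YoungDiagram) : ℕ :=
  ∑ c ∈ lam.cells, c.1
lemma shift_bij {n : ℕ} (hn : 0 < n) (r : ℕ) :
    Function.Bijective (fun j : Fin n => (⟨((j : ℕ) + r) % n, Nat.mod_lt _ hn⟩ : Fin n)) := by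
  rw [Fintype.bijective_iff_injective_and_card]
  refine ⟨fun j1 j2 h => ?_, rfl⟩
  have h' : ((j1 : ℕ) + r) % n = ((j2 : ℕ) + r) % n := congrArg Fin.val h
  have h1 := j1.isLt
  have h2 := j2.isLt
  have := (Nat.ModEq.add_right_cancel' r h').eq_of_lt_of_lt h1 h2
  exact Fin.ext this

lemma cyc_sum {n : ℕ} (hn : 0 < n) (α : Fin n → ℕ) (r : ℕ) :
    ∑ j : Fin n, cyc r α j = ∑ j, α j :=
  Fintype.sum_bijective _ (shift_bij hn r) _ _ (fun _ => rfl)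

lemma zwt_cast {n : ℕ} (hn : 0 < n) (α : Fin n → ℕ) (r : ℕ) :
    ((zwt α r : ℕ) : ZMod n) + (r : ZMod n) * ((∑ i, α i : ℕ) : ZMod n)
      = ∑ k : Fin n, (((k : ℕ) : ZMod n) + 1) * (α k : ZMod n) := by
  have h1 : ((zwt α r : ℕ) : ZMod n)
      = ∑ j : Fin n, (((j : ℕ) : ZMod n) + 1) * (cyc r α j : ZMod n) := by
    unfold zwt; push_cast; rfl
  have h2 : (r : ZMod n) * ((∑ i, α i : ℕ) : ZMod n)
      = ∑ j : Fin n, (r : ZMod n) * (cyc r α j : ZMod n) := by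
    rw [← cyc_sum hn α r]; push_cast; rw [Finset.mul_sum]
  rw [h1, h2, ← Finset.sum_add_distrib]
  refine Fintype.sum_bijective _ (shift_bij hn r)
    _ _ (fun j => ?_)
  show (((j : ℕ) : ZMod n) + 1) * (cyc r α j : ZMod n) + (r : ZMod n) * (cyc r α j : ZMod n)
    = (((((j : ℕ) + r) % n : ℕ) : ZMod n) + 1) * (α ⟨((j : ℕ) + r) % n, Nat.mod_lt _ hn⟩ : ZMod n)
  have hc : (cyc r α j : ZMod n) = (α ⟨((j : ℕ) + r) % n, Nat.mod_lt _ hn⟩ : ZMod n) := rfl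
  rw [hc, ZMod.natCast_mod]
  push_cast
  ring

lemma mod_inj_Icc {n r s : ℕ} (hn : 0 < n) (hr : r ∈ Finset.Icc 1 n) (hs : s ∈ Finset.Icc 1 n)
    (h : r % n = s % n) : r = s := by
  simp only [Finset.mem_Icc] at hr hs
  have h1 : r % n = r ∨ r = n := by
    rcases lt_or_eq_of_le hr.2 with h' | h'
    · exact Or.inl (Nat.mod_eq_of_lt h')
    · exact Or.inr h'
  have h2 : s % n = s ∨ s = n := by
    rcases lt_or_eq_of_le hs.2 with h' | h'
    · exact Or.inl (Nat.mod_eq_of_lt h')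
    · exact Or.inr h'
  have hnn : n % n = 0 := Nat.mod_self n
  rcases h1 with h1 | h1 <;> rcases h2 with h2 | h2
  · omega
  · subst h2; rw [hnn] at h; omega
  · subst h1; rw [hnn] at h; omega
  · omega


/-- If `gcd(m, n) = 1`, then in `ℤ[q]` one has
`Σ_{r=1}^n q^{z_r} ≡ 1 + q + ⋯ + q^{n−1} (mod q^n − 1)`. -/
theorem sum_pow_zwt_modEq (m n : ℕ) (hm : 0 < m) (hn : 0 < n)
    (hgcd : Nat.gcd m n = 1) (α : Fin n → ℕ) (hα : ∑ i, α i = m) :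
    (X ^ n - 1 : Polynomial ℤ) ∣
      (∑ r ∈ Finset.Icc 1 n, (X : Polynomial ℤ) ^ zwt α r) -
        ∑ i ∈ Finset.range n, (X : Polynomial ℤ) ^ i := by
  haveI : NeZero n := ⟨hn.ne'⟩
  have hu : IsUnit (m : ZMod n) := (ZMod.isUnit_iff_coprime m n).mpr hgcd
  -- injectivity of r ↦ zwt α r % n on Icc 1 n
  have hinj : Set.InjOn (fun r => zwt α r % n) (Finset.Icc 1 n) := by
    intro r hr s hs h
    replace h : zwt α r % n = zwt α s % n := h
    have hr' := hr; have hs' := hs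
    simp only [Finset.coe_Icc, Set.mem_Icc] at hr' hs'
    have hcast : ((zwt α r : ℕ) : ZMod n) = ((zwt α s : ℕ) : ZMod n) := by
      rw [← ZMod.natCast_mod (zwt α r) n, ← ZMod.natCast_mod (zwt α s) n, h]
    have h1 := zwt_cast hn α r
    have h2 := zwt_cast hn α s
    rw [hα] at h1 h2
    have hrm : (r : ZMod n) * (m : ZMod n) = (s : ZMod n) * (m : ZMod n) := by
      have := h1.trans h2.symm
      rw [hcast] at this
      exact add_left_cancel this
    have hrs : (r : ZMod n) = (s : ZMod n) := hu.mul_right_cancel hrm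
    have hmod : r % n = s % n := (ZMod.natCast_eq_natCast_iff r s n).mp hrs
    exact mod_inj_Icc hn hr hs hmod
  have hinj' : Set.InjOn (fun r => zwt α r % n) ↑(Finset.Icc 1 n) := hinj
  have himg : (Finset.Icc 1 n).image (fun r => zwt α r % n) = Finset.range n := by
    apply Finset.eq_of_subset_of_card_le
    · intro x hx
      simp only [Finset.mem_image] at hx
      obtain ⟨r, _, rfl⟩ := hx
      exact Finset.mem_range.mpr (Nat.mod_lt _ hn)
    · rw [Finset.card_range, Finset.card_image_of_injOn hinj', Nat.card_Icc]
      omega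
  have hsum2 : (∑ i ∈ Finset.range n, (X : Polynomial ℤ) ^ i)
      = ∑ r ∈ Finset.Icc 1 n, (X : Polynomial ℤ) ^ (zwt α r % n) := by
    rw [← himg, Finset.sum_image (fun x hx y hy h => hinj' hx hy h)]
  rw [hsum2, ← Finset.sum_sub_distrib]
  apply Finset.dvd_sum
  intro r _
  have key : (X : Polynomial ℤ) ^ zwt α r
      = X ^ (zwt α r % n) * ((X ^ n) ^ (zwt α r / n)) := by
    rw [← pow_mul, ← pow_add, Nat.mod_add_div]
  rw [key]
  have : (X : Polynomial ℤ) ^ (zwt α r % n) * (X ^ n) ^ (zwt α r / n) - X ^ (zwt α r % n)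
      = X ^ (zwt α r % n) * ((X ^ n) ^ (zwt α r / n) - 1 ^ (zwt α r / n)) := by
    ring
  rw [this]
  exact Dvd.dvd.mul_left (sub_dvd_pow_sub_pow _ _ _) _
end

section
/- Let λ/μ be a skew shape and n a positive integer with gcd(|λ/μ|, n) = 1. Let ξ ∈ ℂ be a primitive n-th root of unity. Then for every integer k not divisible by n, s_{λ/μ}(1, ξ^k, ξ^{2k}, …, ξ^{(n−1)k}) = 0, while s_{λ/μ}(1, 1, …, 1) = |SSYT(λ/μ, n)|. -/
open Finset Polynomial

namespace BK
variable {lam mu : YoungDiagram}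

lemma mem_skew {i j : ℕ} : (i, j) ∈ skewCells lam mu ↔ (i, j) ∈ lam ∧ (i, j) ∉ mu := by
  simp [skewCells, YoungDiagram.mem_cells]

lemma skew_ext (T T' : SkewSSYT lam mu) (h : T.entry = T'.entry) : T = T' := by
  cases T; cases T'; simpa using h

/-- a down-closed subfinset of ℕ is a range -/
lemma downset_eq_range (s : Finset ℕ) (h : ∀ a b, a ≤ b → b ∈ s → a ∈ s) :
    s = Finset.range s.card := by
  by_cases hs : s.Nonempty
  · have hmax := s.max'_mem hs
    obtain ⟨k, hk⟩ : ∃ k, s = Finset.range k := by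
      refine ⟨s.max' hs + 1, ?_⟩
      ext x
      simp only [Finset.mem_range, Nat.lt_succ_iff]
      exact ⟨fun hx => s.le_max' x hx, fun hx => h x _ hx hmax⟩
    subst hk
    rw [Finset.card_range]
  · simp [Finset.not_nonempty_iff_eq_empty.mp hs]

variable (T : SkewSSYT lam mu)

/-- number of cells in row `r` (within `lam`) with entry `≤ j`; cells of `mu` count (entry 0). -/
def d (j r : ℕ) : ℕ :=
  ((Finset.range (lam.rowLen r)).filter (fun c => T.entry r c ≤ j)).card

lemma entry_le_of_le {j r c1 c2 : ℕ} (h12 : c1 ≤ c2) (h2 : c2 < lam.rowLen r)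
    (hj : T.entry r c2 ≤ j) : T.entry r c1 ≤ j := by
  by_cases h1 : (r, c1) ∈ skewCells lam mu
  · have hlam2 : (r, c2) ∈ lam := YoungDiagram.mem_iff_lt_rowLen.mpr h2
    have h2s : (r, c2) ∈ skewCells lam mu := by
      rw [mem_skew]
      refine ⟨hlam2, fun hmu => ?_⟩
      exact (mem_skew.mp h1).2 (mu.up_left_mem le_rfl h12 hmu)
    rcases eq_or_lt_of_le h12 with rfl | hlt
    · exact hj
    · exact le_trans (T.row_weak' r c1 c2 hlt h1 h2s) hj
  · rw [T.zeros' _ _ h1]; exact Nat.zero_le _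

lemma filter_le_eq_range (j r : ℕ) :
    (Finset.range (lam.rowLen r)).filter (fun c => T.entry r c ≤ j) = Finset.range (d T j r) := by
  apply downset_eq_range
  intro a b hab hb
  simp only [Finset.mem_filter, Finset.mem_range] at *
  exact ⟨lt_of_le_of_lt hab hb.1, entry_le_of_le T hab hb.1 hb.2⟩

lemma lt_d_iff {j r c : ℕ} (hc : c < lam.rowLen r) : c < d T j r ↔ T.entry r c ≤ j := by
  constructor
  · intro h
    have : c ∈ Finset.range (d T j r) := Finset.mem_range.mpr h
    rw [← filter_le_eq_range] at this
    exact (Finset.mem_filter.mp this).2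
  · intro h
    have : c ∈ (Finset.range (lam.rowLen r)).filter (fun c => T.entry r c ≤ j) :=
      Finset.mem_filter.mpr ⟨Finset.mem_range.mpr hc, h⟩
    rw [filter_le_eq_range] at this
    exact Finset.mem_range.mp this

lemma d_le_rowLen (j r : ℕ) : d T j r ≤ lam.rowLen r := by
  calc d T j r ≤ (Finset.range (lam.rowLen r)).card := Finset.card_filter_le _ _
  _ = lam.rowLen r := Finset.card_range _

lemma d_mono {j1 j2 : ℕ} (h : j1 ≤ j2) (r : ℕ) : d T j1 r ≤ d T j2 r := by
  apply Finset.card_le_card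
  intro c hc
  rw [Finset.mem_filter] at *
  exact ⟨hc.1, le_trans hc.2 h⟩

/-- horizontal strip property -/
lemma d_succ_le (j r : ℕ) : d T (j + 1) (r + 1) ≤ d T j r := by
  have : Finset.range (d T (j+1) (r+1)) ⊆ Finset.range (d T j r) := by
    intro c hc
    rw [Finset.mem_range] at *
    have hc1 : c < lam.rowLen (r+1) := lt_of_lt_of_le hc (d_le_rowLen T _ _)
    have hcr : c < lam.rowLen r := lt_of_lt_of_le hc1 (lam.rowLen_anti r (r+1) (Nat.le_succ r))
    have he : T.entry (r+1) c ≤ j + 1 := (lt_d_iff T hc1).mp hc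
    rw [lt_d_iff T hcr]
    by_cases h1 : (r, c) ∈ skewCells lam mu
    · have h2 : (r+1, c) ∈ skewCells lam mu := by
        rw [mem_skew]
        refine ⟨YoungDiagram.mem_iff_lt_rowLen.mpr hc1, fun hmu => ?_⟩
        exact (mem_skew.mp h1).2 (mu.up_left_mem (Nat.le_succ r) le_rfl hmu)
      have := T.col_strict' r (r+1) c (Nat.lt_succ_self r) h1 h2
      omega
    · rw [T.zeros' _ _ h1]; exact Nat.zero_le _
  simpa using Finset.card_le_card this

/-! ### The Bender–Knuth involution at value `v` -/

/-- left bound for the free-interval of value `v` in row `r` -/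
def LL (v r : ℕ) : ℕ := max (d T (v - 1) r) (d T (v + 1) (r + 1))

/-- right bound -/
def UU (v : ℕ) : ℕ → ℕ
  | 0 => d T (v + 1) 0
  | (r + 1) => min (d T (v + 1) (r + 1)) (d T (v - 1) r)

/-- the reflected threshold -/
def th (v r : ℕ) : ℕ := LL T v r + UU T v r - d T v r

variable {T}

section v
variable {v : ℕ} (hv : 1 ≤ v)
include hv

lemma LL_le (r : ℕ) : LL T v r ≤ d T v r := by
  apply max_le (d_mono T (by omega) r)
  have := d_succ_le T v r
  exact this

lemma le_UU (r : ℕ) : d T v r ≤ UU T v r := by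
  cases r with
  | zero => exact d_mono T (by omega) 0
  | succ r =>
    refine le_min (d_mono T (by omega) _) ?_
    have := d_succ_le T (v - 1) r
    have hveq : v - 1 + 1 = v := by omega
    rw [hveq] at this
    exact this

lemma UU_le (r : ℕ) : UU T v r ≤ d T (v + 1) r := by
  cases r with
  | zero => exact le_rfl
  | succ r => exact min_le_left _ _

lemma le_LL (r : ℕ) : d T (v - 1) r ≤ LL T v r := le_max_left _ _

lemma LL_le_th (r : ℕ) : LL T v r ≤ th T v r := by
  have h1 := LL_le (T := T) hv r
  have h2 := le_UU (T := T) hv r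
  unfold th; omega

lemma th_le_UU (r : ℕ) : th T v r ≤ UU T v r := by
  have h1 := LL_le (T := T) hv r
  have h2 := le_UU (T := T) hv r
  unfold th; omega

lemma a_le_th (r : ℕ) : d T (v - 1) r ≤ th T v r :=
  le_trans (le_LL (T := T) hv r) (LL_le_th hv r)

lemma th_le_b (r : ℕ) : th T v r ≤ d T (v + 1) r :=
  le_trans (th_le_UU hv r) (UU_le (T := T) hv r)

/-- the region of values `v, v+1` in row `r` are the columns in `[d (v-1) r, d (v+1) r)`. -/
lemma region_iff {r c : ℕ} (hc : c < lam.rowLen r) :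
    (T.entry r c = v ∨ T.entry r c = v + 1) ↔ (d T (v - 1) r ≤ c ∧ c < d T (v + 1) r) := by
  rw [← not_lt, lt_d_iff T hc, lt_d_iff T hc]
  omega

end v

variable (T)

/-- the entries of the Bender–Knuth involution `bk v T` -/
def bkEntry (v r c : ℕ) : ℕ :=
  if T.entry r c = v ∨ T.entry r c = v + 1 then (if c < th T v r then v else v + 1)
  else T.entry r c

variable {T}

lemma rowLen_lt_of_skew {r c : ℕ} (h : (r, c) ∈ skewCells lam mu) : c < lam.rowLen r :=
  YoungDiagram.mem_iff_lt_rowLen.mp (mem_skew.mp h).1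

lemma bkEntry_of_not {v r c : ℕ} (h : ¬(T.entry r c = v ∨ T.entry r c = v + 1)) :
    bkEntry T v r c = T.entry r c := by simp only [bkEntry, if_neg h]

section v2
variable {v : ℕ} (hv : 1 ≤ v)
include hv

lemma bkEntry_zeros {r c : ℕ} (h : (r, c) ∉ skewCells lam mu) : bkEntry T v r c = 0 := by
  have h0 := T.zeros' r c h
  rw [bkEntry_of_not (by omega)]
  exact h0

lemma bkEntry_row_weak {r c1 c2 : ℕ} (h12 : c1 < c2) (h1 : (r, c1) ∈ skewCells lam mu)
    (h2 : (r, c2) ∈ skewCells lam mu) : bkEntry T v r c1 ≤ bkEntry T v r c2 := by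
  have hc1 : c1 < lam.rowLen r := rowLen_lt_of_skew h1
  have hc2 : c2 < lam.rowLen r := rowLen_lt_of_skew h2
  have hw := T.row_weak' r c1 c2 h12 h1 h2
  by_cases m1 : T.entry r c1 = v ∨ T.entry r c1 = v + 1 <;>
    by_cases m2 : T.entry r c2 = v ∨ T.entry r c2 = v + 1
  · -- both in region
    simp only [bkEntry, if_pos m1, if_pos m2]
    by_cases hth : c1 < th T v r
    · rw [if_pos hth]; split <;> omega
    · rw [if_neg hth, if_neg (by omega)]
  · -- c1 in region, c2 not: entry c2 ≥ v+2
    have hr1 := (region_iff hv hc1).mp m1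
    have hr2 : ¬ (d T (v-1) r ≤ c2 ∧ c2 < d T (v+1) r) := fun hh => m2 ((region_iff hv hc2).mpr hh)
    have hge : d T (v+1) r ≤ c2 := by omega
    have : ¬ (T.entry r c2 ≤ v + 1) := by rw [← lt_d_iff T hc2]; omega
    simp only [bkEntry, if_pos m1, if_neg m2]
    split <;> omega
  · -- c2 in region, c1 not: entry c1 ≤ v - 1
    have hr2 := (region_iff hv hc2).mp m2
    have hr1 : ¬ (d T (v-1) r ≤ c1 ∧ c1 < d T (v+1) r) := fun hh => m1 ((region_iff hv hc1).mpr hh)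
    have hlt : c1 < d T (v-1) r := by omega
    have : T.entry r c1 ≤ v - 1 := (lt_d_iff T hc1).mp hlt
    simp only [bkEntry, if_pos m2, if_neg m1]
    split <;> omega
  · simp only [bkEntry, if_neg m1, if_neg m2]; exact hw

lemma bkEntry_col_strict_succ {r c : ℕ} (h1 : (r, c) ∈ skewCells lam mu)
    (h2 : (r + 1, c) ∈ skewCells lam mu) : bkEntry T v r c < bkEntry T v (r + 1) c := by
  have hc1 : c < lam.rowLen r := rowLen_lt_of_skew h1
  have hc2 : c < lam.rowLen (r + 1) := rowLen_lt_of_skew h2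
  have hcs := T.col_strict' r (r + 1) c (Nat.lt_succ_self r) h1 h2
  by_cases m1 : T.entry r c = v ∨ T.entry r c = v + 1 <;>
    by_cases m2 : T.entry (r+1) c = v ∨ T.entry (r+1) c = v + 1
  · -- both in region: top becomes v, bottom becomes v+1
    have hr1 := (region_iff hv hc1).mp m1
    have hr2 := (region_iff hv hc2).mp m2
    have htop : c < th T v r := by
      have : d T (v+1) (r+1) ≤ LL T v r := le_max_right _ _
      have := LL_le_th (T := T) hv r
      omega
    have hbot : ¬ (c < th T v (r+1)) := by
      have h1' : UU T v (r+1) ≤ d T (v-1) r := min_le_right _ _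
      have := th_le_UU (T := T) hv (r+1)
      omega
    simp only [bkEntry, if_pos m1, if_pos m2, if_pos htop, if_neg hbot]
    omega
  · -- top region, bottom ≥ v+2
    have : ¬ (T.entry (r+1) c ≤ v + 1) := by
      intro hle
      exact m2 (by omega)
    simp only [bkEntry, if_pos m1, if_neg m2]
    split <;> omega
  · -- bottom region, top ≤ v-1
    have : T.entry r c ≤ v - 1 := by omega
    simp only [bkEntry, if_pos m2, if_neg m1]
    split <;> omega
  · simp only [bkEntry, if_neg m1, if_neg m2]; exact hcs

omit hv in
lemma skew_mid {r1 r2 c : ℕ} (h1 : (r1, c) ∈ skewCells lam mu) (h2 : (r2, c) ∈ skewCells lam mu)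
    {r : ℕ} (hr1 : r1 ≤ r) (hr2 : r ≤ r2) : (r, c) ∈ skewCells lam mu := by
  rw [mem_skew] at *
  exact ⟨lam.up_left_mem hr2 le_rfl h2.1, fun hmu => h1.2 (mu.up_left_mem hr1 le_rfl hmu)⟩

lemma bkEntry_col_strict {r1 r2 c : ℕ} (h12 : r1 < r2) (h1 : (r1, c) ∈ skewCells lam mu)
    (h2 : (r2, c) ∈ skewCells lam mu) : bkEntry T v r1 c < bkEntry T v r2 c := by
  induction r2 with
  | zero => omega
  | succ r ih =>
    rcases Nat.lt_succ_iff_lt_or_eq.mp h12 with h | rfl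
    · have hmid : (r, c) ∈ skewCells lam mu := skew_mid h1 h2 (by omega) (by omega)
      exact lt_trans (ih h hmid) (bkEntry_col_strict_succ hv hmid h2)
    · exact bkEntry_col_strict_succ hv h1 h2

end v2

variable (T)

/-- The Bender–Knuth involution at value `v ≥ 1` (identity if `v = 0`). -/
def bk (v : ℕ) : SkewSSYT lam mu :=
  if hv : 1 ≤ v then
    { entry := bkEntry T v
      pos' := fun i j h => by
        have := T.pos' i j h
        by_cases m : T.entry i j = v ∨ T.entry i j = v + 1
        · simp only [bkEntry, if_pos m]; split <;> omega
        · rw [bkEntry_of_not m]; exact this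
      zeros' := fun i j h => bkEntry_zeros hv h
      row_weak' := fun i j1 j2 h h1 h2 => bkEntry_row_weak hv h h1 h2
      col_strict' := fun i1 i2 j h h1 h2 => bkEntry_col_strict hv h h1 h2 }
  else T

lemma bk_entry {v : ℕ} (hv : 1 ≤ v) : (bk T v).entry = bkEntry T v := by
  rw [bk, dif_pos hv]

variable {T}

section v3
variable {v : ℕ} (hv : 1 ≤ v)
include hv

lemma bkEntry_le_v_iff {r c : ℕ} (hc : c < lam.rowLen r) :
    bkEntry T v r c ≤ v ↔ c < th T v r := by
  by_cases m : T.entry r c = v ∨ T.entry r c = v + 1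
  · have hr := (region_iff hv hc).mp m
    simp only [bkEntry, if_pos m]
    split <;> omega
  · rw [bkEntry_of_not m]
    have hr : ¬ (d T (v-1) r ≤ c ∧ c < d T (v+1) r) := fun hh => m ((region_iff hv hc).mpr hh)
    by_cases ha : c < d T (v - 1) r
    · have h1 : T.entry r c ≤ v - 1 := (lt_d_iff T hc).mp ha
      have h2 : c < th T v r := lt_of_lt_of_le ha (a_le_th hv r)
      omega
    · have hb : d T (v+1) r ≤ c := by omega
      have h1 : ¬ (T.entry r c ≤ v + 1) := by rw [← lt_d_iff T hc]; omega
      have h2 : ¬ (c < th T v r) := by have := th_le_b (T := T) hv r; omega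
      omega

lemma bkEntry_le_iff {j r c : ℕ} (hj : j ≠ v) (hc : c < lam.rowLen r) :
    bkEntry T v r c ≤ j ↔ T.entry r c ≤ j := by
  by_cases m : T.entry r c = v ∨ T.entry r c = v + 1
  · simp only [bkEntry, if_pos m]
    rcases Nat.lt_or_ge j v with h | h
    · split <;> omega
    · have : v + 1 ≤ j := by omega
      split <;> omega
  · rw [bkEntry_of_not m]

lemma d_bk_ne {j r : ℕ} (hj : j ≠ v) : d (bk T v) j r = d T j r := by
  unfold d
  rw [bk_entry T hv]
  apply congrArg
  apply Finset.filter_congr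
  intro c hc
  rw [Finset.mem_range] at hc
  simp only [bkEntry_le_iff hv hj hc]

lemma d_bk_v (r : ℕ) : d (bk T v) v r = th T v r := by
  unfold d
  rw [bk_entry T hv]
  have : (Finset.range (lam.rowLen r)).filter (fun c => bkEntry T v r c ≤ v)
      = Finset.range (th T v r) := by
    ext c
    simp only [Finset.mem_filter, Finset.mem_range]
    constructor
    · rintro ⟨hc, h⟩
      exact (bkEntry_le_v_iff hv hc).mp h
    · intro h
      have hc : c < lam.rowLen r :=
        lt_of_lt_of_le h (le_trans (th_le_b hv r) (d_le_rowLen T _ r))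
      exact ⟨hc, (bkEntry_le_v_iff hv hc).mpr h⟩
  rw [this, Finset.card_range]

lemma LL_bk (r : ℕ) : LL (bk T v) v r = LL T v r := by
  unfold LL
  rw [d_bk_ne hv (by omega), d_bk_ne hv (by omega)]

lemma UU_bk (r : ℕ) : UU (bk T v) v r = UU T v r := by
  cases r with
  | zero => simp only [UU]; rw [d_bk_ne hv (by omega)]
  | succ r => simp only [UU]; rw [d_bk_ne hv (by omega), d_bk_ne hv (by omega)]

lemma th_bk (r : ℕ) : th (bk T v) v r = d T v r := by
  unfold th
  rw [LL_bk hv, UU_bk hv, d_bk_v hv]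
  have h1 := LL_le (T := T) hv r
  have h2 := le_UU (T := T) hv r
  unfold th
  omega

lemma bk_bk : bk (bk T v) v = T := by
  apply skew_ext
  rw [bk_entry _ hv]
  funext r c
  by_cases hc : c < lam.rowLen r
  · by_cases m : T.entry r c = v ∨ T.entry r c = v + 1
    · have hr := (region_iff hv hc).mp m
      have hbk : (bk T v).entry r c = if c < th T v r then v else v + 1 := by
        rw [bk_entry _ hv]; simp only [bkEntry, if_pos m]
      have m' : (bk T v).entry r c = v ∨ (bk T v).entry r c = v + 1 := by
        rw [hbk]; split
        · exact Or.inl rfl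
        · exact Or.inr rfl
      have hdv : c < d T v r ↔ T.entry r c ≤ v := lt_d_iff T hc
      simp only [bkEntry, if_pos m', th_bk hv]
      split
      · -- c < d T v r, so entry ≤ v, and entry ∈ {v, v+1} so entry = v
        rename_i hlt
        rw [hdv] at hlt
        omega
      · rename_i hge
        rw [hdv] at hge
        omega
    · have hbk : (bk T v).entry r c = T.entry r c := by
        rw [bk_entry _ hv]; exact bkEntry_of_not m
      have m' : ¬((bk T v).entry r c = v ∨ (bk T v).entry r c = v + 1) := by
        rw [hbk]; exact m
      rw [bkEntry_of_not m', hbk]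
  · have hns : (r, c) ∉ skewCells lam mu := by
      intro h
      exact hc (rowLen_lt_of_skew h)
    rw [bkEntry_zeros hv hns, T.zeros' r c hns]

end v3

/-! ### Weight computations -/

lemma row_lt_of_mem {r c : ℕ} (h : (r, c) ∈ lam) : r < lam.card + 1 := by
  have hsub : (Finset.range (r + 1)).image (fun i => (i, (0 : ℕ))) ⊆ lam.cells := by
    intro x hx
    simp only [Finset.mem_image, Finset.mem_range] at hx
    obtain ⟨i, hi, rfl⟩ := hx
    exact (YoungDiagram.mem_cells _).mpr (lam.up_left_mem (by omega) (Nat.zero_le _) h)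
  have hcard := Finset.card_le_card hsub
  rw [Finset.card_image_of_injective _ (fun x y hxy => (Prod.mk.injEq _ _ _ _).mp hxy |>.1),
    Finset.card_range] at hcard
  have hc2 : lam.card = lam.cells.card := rfl
  omega

lemma rowLen_top : lam.rowLen (lam.card + 1) = 0 := by
  by_contra h
  have : (lam.card + 1, 0) ∈ lam := YoungDiagram.mem_iff_lt_rowLen.mpr (by omega)
  exact absurd (row_lt_of_mem this) (by omega)

lemma wt_eq_sum {j : ℕ} (hj : 1 ≤ j) :
    T.wt j = ∑ r ∈ Finset.range (lam.card + 1), (d T j r - d T (j - 1) r) := by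
  have h1 : T.wt j = ((lam.cells).filter (fun c => T.entry c.1 c.2 = j)).card := by
    unfold SkewSSYT.wt
    congr 1
    ext c
    simp only [Finset.mem_filter, skewCells, Finset.mem_sdiff]
    constructor
    · rintro ⟨⟨h1, _⟩, h2⟩
      exact ⟨h1, h2⟩
    · rintro ⟨h1, h2⟩
      refine ⟨⟨h1, fun hmu => ?_⟩, h2⟩
      by_cases hs : (c.1, c.2) ∈ skewCells lam mu
      · exact (mem_skew.mp hs).2 ((YoungDiagram.mem_cells _).mp (by simpa using hmu))
      · have := T.zeros' c.1 c.2 hs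
        omega
  rw [h1, Finset.card_eq_sum_card_fiberwise
    (f := fun c => c.1) (t := Finset.range (lam.card + 1))
    (fun x hx => Finset.mem_range.mpr (row_lt_of_mem
      ((YoungDiagram.mem_cells _).mp (by simpa using (Finset.mem_filter.mp hx).1))))]
  apply Finset.sum_congr rfl
  intro r _
  have himg : ((lam.cells).filter (fun c => T.entry c.1 c.2 = j)).filter (fun c => c.1 = r)
      = ((Finset.range (lam.rowLen r)).filter (fun c => T.entry r c = j)).image (fun c => (r, c)) := by
    ext x
    simp only [Finset.mem_filter, Finset.mem_image, Finset.mem_range]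
    constructor
    · rintro ⟨⟨hmem, hj'⟩, hr⟩
      obtain ⟨x1, x2⟩ := x
      simp only at hr
      subst hr
      exact ⟨x2, ⟨YoungDiagram.mem_iff_lt_rowLen.mp ((YoungDiagram.mem_cells _).mp hmem), hj'⟩, rfl⟩
    · rintro ⟨c, ⟨hc, hcj⟩, rfl⟩
      exact ⟨⟨(YoungDiagram.mem_cells _).mpr (YoungDiagram.mem_iff_lt_rowLen.mpr hc), hcj⟩, rfl⟩
  rw [himg, Finset.card_image_of_injective _ (fun x y hxy => by simpa using hxy)]
  have hsplit : (Finset.range (lam.rowLen r)).filter (fun c => T.entry r c = j)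
      = ((Finset.range (lam.rowLen r)).filter (fun c => T.entry r c ≤ j))
        \ ((Finset.range (lam.rowLen r)).filter (fun c => T.entry r c ≤ j - 1)) := by
    ext c
    simp only [Finset.mem_filter, Finset.mem_sdiff, Finset.mem_range]
    omega
  rw [hsplit, Finset.card_sdiff_of_subset (by
    intro c hc
    simp only [Finset.mem_filter, Finset.mem_range] at *
    exact ⟨hc.1, by omega⟩)]
  rfl

variable (T)

def AA (v r : ℕ) : ℕ := d T (v+1) (r+1) - d T (v-1) r

def BB (v : ℕ) : ℕ → ℕ
  | 0 => 0
  | (r + 1) => AA T v r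

variable {T}

section v4
variable {v : ℕ} (hv : 1 ≤ v)
include hv

lemma wt_bk_ne {j : ℕ} (hj : 1 ≤ j) (hjv : j ≠ v) (hjv1 : j ≠ v + 1) :
    (bk T v).wt j = T.wt j := by
  rw [wt_eq_sum hj, wt_eq_sum hj]
  apply Finset.sum_congr rfl
  intro r _
  rw [d_bk_ne hv hjv, d_bk_ne hv (by omega)]

lemma rowid1 (r : ℕ) :
    (th T v r - d T (v - 1) r) + BB T v r
      = (d T (v+1) r - d T v r) + AA T v r := by
  have h1 : d T (v - 1) r ≤ d T v r := d_mono T (by omega) r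
  have h2 : d T v r ≤ d T (v + 1) r := d_mono T (by omega) r
  have h3 : d T (v + 1) (r + 1) ≤ d T v r := d_succ_le T v r
  cases r with
  | zero =>
    simp only [th, LL, UU, AA, BB]
    omega
  | succ r' =>
    have h5 : d T v (r' + 1) ≤ d T (v - 1) r' := by
      have := d_succ_le T (v - 1) r'
      rwa [Nat.sub_add_cancel hv] at this
    have h6 : d T (v + 1) (r' + 1) ≤ d T v r' := d_succ_le T v r'
    have h7 : d T (v - 1) r' ≤ d T v r' := d_mono T (by omega) r'
    simp only [th, LL, UU, AA, BB]
    omega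

lemma rowid2 (r : ℕ) :
    (d T (v+1) r - th T v r) + AA T v r
      = (d T v r - d T (v - 1) r) + BB T v r := by
  have h1 : d T (v - 1) r ≤ d T v r := d_mono T (by omega) r
  have h2 : d T v r ≤ d T (v + 1) r := d_mono T (by omega) r
  have h3 : d T (v + 1) (r + 1) ≤ d T v r := d_succ_le T v r
  cases r with
  | zero =>
    simp only [th, LL, UU, AA, BB]
    omega
  | succ r' =>
    have h5 : d T v (r' + 1) ≤ d T (v - 1) r' := by
      have := d_succ_le T (v - 1) r'
      rwa [Nat.sub_add_cancel hv] at this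
    have h6 : d T (v + 1) (r' + 1) ≤ d T v r' := d_succ_le T v r'
    have h7 : d T (v - 1) r' ≤ d T v r' := d_mono T (by omega) r'
    simp only [th, LL, UU, AA, BB]
    omega

omit hv in
lemma sum_B_eq_sum_A :
    ∑ r ∈ Finset.range (lam.card + 1), BB T v r
      = ∑ r ∈ Finset.range (lam.card + 1), AA T v r := by
  rw [Finset.sum_range_succ' (BB T v) lam.card,
    Finset.sum_range_succ (AA T v) lam.card]
  have hz : AA T v lam.card = 0 := by
    have h := d_le_rowLen T (v+1) (lam.card + 1)
    rw [rowLen_top] at h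
    simp only [AA]
    omega
  simp [hz, BB]

lemma wt_bk_v : (bk T v).wt v = T.wt (v + 1) := by
  rw [wt_eq_sum hv, wt_eq_sum (by omega : 1 ≤ v + 1)]
  have hL : ∀ r, d (bk T v) v r - d (bk T v) (v - 1) r = th T v r - d T (v - 1) r := by
    intro r
    rw [d_bk_v hv, d_bk_ne hv (by omega)]
  have hR : v + 1 - 1 = v := by omega
  simp only [hL, hR]
  have h1 : ∑ r ∈ Finset.range (lam.card + 1), ((th T v r - d T (v - 1) r) + BB T v r)
      = ∑ r ∈ Finset.range (lam.card + 1), ((d T (v+1) r - d T v r) + AA T v r) :=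
    Finset.sum_congr rfl (fun r _ => rowid1 (T := T) hv r)
  rw [Finset.sum_add_distrib, Finset.sum_add_distrib, sum_B_eq_sum_A] at h1
  exact Nat.add_right_cancel h1

lemma wt_bk_v1 : (bk T v).wt (v + 1) = T.wt v := by
  rw [wt_eq_sum (by omega : 1 ≤ v + 1), wt_eq_sum hv]
  have hL : ∀ r, d (bk T v) (v + 1) r - d (bk T v) (v + 1 - 1) r
      = d T (v+1) r - th T v r := by
    intro r
    rw [d_bk_ne hv (by omega)]
    have h : v + 1 - 1 = v := by omega
    rw [h, d_bk_v hv]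
  simp only [hL]
  have h1 : ∑ r ∈ Finset.range (lam.card + 1), ((d T (v+1) r - th T v r) + AA T v r)
      = ∑ r ∈ Finset.range (lam.card + 1), ((d T v r - d T (v - 1) r) + BB T v r) :=
    Finset.sum_congr rfl (fun r _ => rowid2 (T := T) hv r)
  rw [Finset.sum_add_distrib, Finset.sum_add_distrib, sum_B_eq_sum_A] at h1
  exact Nat.add_right_cancel h1

end v4

/-! ### Promotion: composite of Bender–Knuth involutions -/

def SSYTbddX (n : ℕ) : Set (SkewSSYT lam mu) :=
  {T | ∀ i j, (i, j) ∈ skewCells lam mu → T.entry i j ≤ n}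

lemma bk_mem_bdd {n v : ℕ} {T : SkewSSYT lam mu} (hv1 : 1 ≤ v) (hvn : v + 1 ≤ n)
    (hT : T ∈ SSYTbddX (lam := lam) (mu := mu) n) : bk T v ∈ SSYTbddX (lam := lam) (mu := mu) n := by
  intro i j hij
  rw [bk_entry _ hv1]
  by_cases m : T.entry i j = v ∨ T.entry i j = v + 1
  · simp only [bkEntry, if_pos m]; split <;> omega
  · rw [bkEntry_of_not m]; exact hT i j hij

variable (T)

def pro : ℕ → SkewSSYT lam mu
  | 0 => T
  | (k + 1) => bk (pro k) (k + 1)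

def proInv : ℕ → SkewSSYT lam mu → SkewSSYT lam mu
  | 0, T => T
  | (k + 1), T => proInv k (bk T (k + 1))

variable {T}

lemma proInv_pro (k : ℕ) : proInv k (pro T k) = T := by
  induction k with
  | zero => rfl
  | succ k ih =>
    show proInv k (bk (bk (pro T k) (k+1)) (k+1)) = T
    rw [bk_bk (by omega)]
    exact ih

lemma pro_proInv (k : ℕ) : ∀ T : SkewSSYT lam mu, pro (proInv k T) k = T := by
  induction k with
  | zero => intro T; rfl
  | succ k ih =>
    intro T
    show bk (pro (proInv k (bk T (k+1))) k) (k+1) = T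
    rw [ih (bk T (k+1)), bk_bk (by omega)]

lemma pro_mem_bdd {n k : ℕ} (hk : k + 1 ≤ n) (hT : T ∈ SSYTbddX (lam := lam) (mu := mu) n) :
    pro T k ∈ SSYTbddX (lam := lam) (mu := mu) n := by
  induction k with
  | zero => exact hT
  | succ k ih =>
    exact bk_mem_bdd (by omega) (by omega) (ih (by omega))

lemma proInv_mem_bdd {n k : ℕ} (hk : k + 1 ≤ n) :
    ∀ {T : SkewSSYT lam mu}, T ∈ SSYTbddX (lam := lam) (mu := mu) n →
      proInv k T ∈ SSYTbddX (lam := lam) (mu := mu) n := by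
  induction k with
  | zero => exact fun hT => hT
  | succ k ih =>
    intro T hT
    exact ih (by omega) (bk_mem_bdd (by omega) (by omega) hT)

lemma wt_pro (k : ℕ) :
    (∀ j, 1 ≤ j → j ≤ k → (pro T k).wt j = T.wt (j + 1))
      ∧ (pro T k).wt (k + 1) = T.wt 1
      ∧ (∀ j, k + 2 ≤ j → (pro T k).wt j = T.wt j) := by
  induction k with
  | zero => exact ⟨fun j h1 h2 => by omega, rfl, fun j hj => rfl⟩
  | succ k ih =>
    obtain ⟨ih1, ih2, ih3⟩ := ih
    refine ⟨?_, ?_, ?_⟩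
    · intro j hj1 hjk
      show (bk (pro T k) (k+1)).wt j = T.wt (j + 1)
      rcases Nat.lt_or_ge j (k + 1) with h | h
      · rw [wt_bk_ne (by omega) hj1 (by omega) (by omega)]
        exact ih1 j hj1 (by omega)
      · have hj : j = k + 1 := by omega
        subst hj
        rw [wt_bk_v (by omega)]
        exact ih3 (k + 2) le_rfl
    · show (bk (pro T k) (k+1)).wt (k + 2) = T.wt 1
      rw [show k + 2 = (k + 1) + 1 from rfl, wt_bk_v1 (by omega)]
      exact ih2
    · intro j hj
      show (bk (pro T k) (k+1)).wt j = T.wt j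
      rw [wt_bk_ne (by omega) (by omega) (by omega) (by omega)]
      exact ih3 j (by omega)

/-! ### Finiteness -/

lemma bdd_finite (n : ℕ) : (SSYTbddX (lam := lam) (mu := mu) n).Finite := by
  rw [← Set.finite_coe_iff]
  have hinj : Function.Injective
      (fun (T : ↥(SSYTbddX (lam := lam) (mu := mu) n)) =>
        (fun c : {x // x ∈ skewCells lam mu} =>
          (⟨T.1.entry c.1.1 c.1.2, by
            have := T.2 c.1.1 c.1.2 (by simpa using c.2)
            omega⟩ : Fin (n + 1)))) := by
    intro T1 T2 h
    apply Subtype.ext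
    apply skew_ext
    funext r c
    by_cases hc : (r, c) ∈ skewCells lam mu
    · have := congrFun h ⟨(r, c), hc⟩
      simpa using this
    · rw [T1.1.zeros' r c hc, T2.1.zeros' r c hc]
  exact Finite.of_injective _ hinj

/-- total content equals number of cells -/
lemma sum_wt {n : ℕ} (hT : T ∈ SSYTbddX (lam := lam) (mu := mu) n) :
    ∑ i ∈ Finset.range n, T.wt (i + 1) = (skewCells lam mu).card := by
  rw [Finset.card_eq_sum_card_fiberwise
    (f := fun c => T.entry c.1 c.2 - 1) (t := Finset.range n) (fun x hx => by
      have h1 := T.pos' x.1 x.2 (by simpa using hx)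
      have h2 := hT x.1 x.2 (by simpa using hx)
      simp only [Finset.mem_range]
      rw [Finset.mem_coe, Finset.mem_range]
      omega)]
  apply Finset.sum_congr rfl
  intro i _
  unfold SkewSSYT.wt
  congr 1
  apply Finset.filter_congr
  intro c hc
  have h1 := T.pos' c.1 c.2 (by simpa using hc)
  omega

/-! ### The weighted statistic `g` -/

variable (T)

def gwt (n : ℕ) : ℕ := ∑ i ∈ Finset.range n, i * T.wt (i + 1)

variable {T}

lemma g_pro {n : ℕ} (hn : 0 < n) (hT : T ∈ SSYTbddX (lam := lam) (mu := mu) n) :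
    gwt (pro T (n - 1)) n + (skewCells lam mu).card = gwt T n + n * T.wt 1 := by
  obtain ⟨M, rfl⟩ : ∃ M, n = M + 1 := ⟨n - 1, by omega⟩
  simp only [Nat.add_sub_cancel]
  obtain ⟨w1, w2, w3⟩ := wt_pro (T := T) M
  have e1 : gwt (pro T M) (M + 1)
      = (∑ i ∈ Finset.range M, i * T.wt (i + 2)) + M * T.wt 1 := by
    rw [gwt, Finset.sum_range_succ, w2]
    congr 1
    apply Finset.sum_congr rfl
    intro i hi
    rw [Finset.mem_range] at hi
    rw [w1 (i + 1) (by omega) (by omega)]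
  have e2 : gwt T (M + 1) = ∑ i ∈ Finset.range M, (i + 1) * T.wt (i + 2) := by
    rw [gwt, Finset.sum_range_succ' (fun i => i * T.wt (i + 1)) M]
    simp
  have e3 : (skewCells lam mu).card = (∑ i ∈ Finset.range M, T.wt (i + 2)) + T.wt 1 := by
    rw [← sum_wt hT, Finset.sum_range_succ' (fun i => T.wt (i + 1)) M]
  have e4 : ∑ i ∈ Finset.range M, (i + 1) * T.wt (i + 2)
      = (∑ i ∈ Finset.range M, i * T.wt (i + 2)) + ∑ i ∈ Finset.range M, T.wt (i + 2) := by
    rw [← Finset.sum_add_distrib]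
    apply Finset.sum_congr rfl
    intro i _
    ring
  rw [e1, e2, e3, e4]
  ring

lemma zpow_sum' (x : ℂ) (hx : x ≠ 0) (s : Finset ℕ) (f : ℕ → ℤ) :
    ∏ i ∈ s, x ^ f i = x ^ (∑ i ∈ s, f i) := by
  induction s using Finset.cons_induction with
  | empty => simp
  | cons a s ha ih => rw [Finset.prod_cons, Finset.sum_cons, ih, ← zpow_add₀ hx]

end BK

/-- If `gcd(|λ/μ|, n) = 1` and `ξ` is a primitive `n`-th root of unity, then
`s_{λ/μ}(1, ξ^k, ξ^{2k}, …, ξ^{(n−1)k}) = 0` for every integer `k` with `n ∤ k`, while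
`s_{λ/μ}(1, 1, …, 1) = |SSYT(λ/μ, n)|`. -/
theorem skewSchur_vanishes_at_roots (lam mu : YoungDiagram) (hsub : mu ≤ lam)
    (n : ℕ) (hn : 0 < n) (hgcd : Nat.gcd (lam.card - mu.card) n = 1)
    (ξ : ℂ) (hξ : IsPrimitiveRoot ξ n) :
    (∀ k : ℤ, ¬ (n : ℤ) ∣ k →
      skewSchurEval lam mu n (fun i => ξ ^ (((i : ℕ) : ℤ) * k)) = 0) ∧
    skewSchurEval lam mu n (fun _ => (1 : ℂ)) = (Nat.card ↥(SSYTbdd lam mu n) : ℂ) := by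
  have hfin : (SSYTbdd lam mu n).Finite := BK.bdd_finite (lam := lam) (mu := mu) n
  have hset : SSYTbdd lam mu n = ↑hfin.toFinset := (Set.Finite.coe_toFinset _).symm
  have hm : (skewCells lam mu).card = lam.card - mu.card := Finset.card_sdiff_of_subset hsub
  constructor
  · intro k hk
    have hξ0 : ξ ≠ 0 := hξ.ne_zero (by omega)
    rw [skewSchurEval, hset, finsum_mem_coe_finset]
    have hterm : ∀ T ∈ hfin.toFinset,
        (∏ i : Fin n, (ξ ^ (((i : ℕ) : ℤ) * k)) ^ T.wt ((i : ℕ) + 1))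
          = ξ ^ (k * (BK.gwt T n : ℤ)) := by
      intro T _
      rw [Fin.prod_univ_eq_prod_range (fun i => (ξ ^ ((i : ℤ) * k)) ^ T.wt (i + 1)) n]
      have hfac : ∀ i : ℕ, (ξ ^ ((i : ℤ) * k)) ^ T.wt (i + 1)
          = ξ ^ (((i : ℤ) * k) * (T.wt (i + 1) : ℤ)) := by
        intro i
        rw [← zpow_natCast (ξ ^ ((i : ℤ) * k)) (T.wt (i + 1)), ← zpow_mul]
      rw [Finset.prod_congr rfl (fun i _ => hfac i),
        BK.zpow_sum' ξ hξ0]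
      congr 1
      rw [BK.gwt]
      push_cast
      rw [Finset.mul_sum]
      apply Finset.sum_congr rfl
      intro i _
      ring
    rw [Finset.sum_congr rfl hterm]
    set S := ∑ T ∈ hfin.toFinset, ξ ^ (k * (BK.gwt T n : ℤ)) with hS
    have hre : S = ∑ T ∈ hfin.toFinset, ξ ^ (k * (BK.gwt (BK.pro T (n - 1)) n : ℤ)) := by
      rw [hS]
      apply Finset.sum_nbij' (i := fun T => BK.proInv (n - 1) T) (j := fun T => BK.pro T (n - 1))
      · intro a ha
        rw [Set.Finite.mem_toFinset] at *
        exact BK.proInv_mem_bdd (by omega) ha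
      · intro a ha
        rw [Set.Finite.mem_toFinset] at *
        exact BK.pro_mem_bdd (by omega) ha
      · intro a _
        exact BK.pro_proInv _ a
      · intro a _
        exact BK.proInv_pro _
      · intro a _
        rw [BK.pro_proInv]
    have hone : ξ ^ ((n : ℤ)) = 1 := by
      rw [zpow_natCast]
      exact hξ.pow_eq_one
    have key : ∀ T ∈ hfin.toFinset,
        ξ ^ (k * (BK.gwt (BK.pro T (n - 1)) n : ℤ)) * ξ ^ (k * ((lam.card - mu.card : ℕ) : ℤ))
          = ξ ^ (k * (BK.gwt T n : ℤ)) := by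
      intro T hT
      rw [Set.Finite.mem_toFinset] at hT
      have hg := BK.g_pro (T := T) hn hT
      rw [hm] at hg
      have hgz : (BK.gwt (BK.pro T (n - 1)) n : ℤ) + ((lam.card - mu.card : ℕ) : ℤ)
          = (BK.gwt T n : ℤ) + (n : ℤ) * (T.wt 1 : ℤ) := by
        exact_mod_cast congrArg (Nat.cast : ℕ → ℤ) hg
      rw [← zpow_add₀ hξ0, ← mul_add, hgz, mul_add, zpow_add₀ hξ0]
      have : ξ ^ (k * ((n : ℤ) * (T.wt 1 : ℤ))) = 1 := by
        rw [show k * ((n : ℤ) * (T.wt 1 : ℤ)) = (n : ℤ) * (k * (T.wt 1 : ℤ)) by ring,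
          zpow_mul, hone, one_zpow]
      rw [this, mul_one]
    have hSq : S * ξ ^ (k * ((lam.card - mu.card : ℕ) : ℤ)) = S := by
      conv_lhs => rw [hre]
      rw [Finset.sum_mul]
      rw [Finset.sum_congr rfl key]
    have hq : ξ ^ (k * ((lam.card - mu.card : ℕ) : ℤ)) ≠ 1 := by
      rw [Ne, hξ.zpow_eq_one_iff_dvd]
      intro hdvd
      apply hk
      have hcop : IsCoprime ((n : ℤ)) (((lam.card - mu.card : ℕ) : ℤ)) := by
        rw [Int.isCoprime_iff_gcd_eq_one, Int.gcd_natCast_natCast, Nat.gcd_comm]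
        exact hgcd
      exact hcop.dvd_of_dvd_mul_right hdvd
    have := sub_ne_zero.mpr hq
    have hz : S * (ξ ^ (k * ((lam.card - mu.card : ℕ) : ℤ)) - 1) = 0 := by
      rw [mul_sub, hSq, mul_one, sub_self]
    rcases mul_eq_zero.mp hz with h | h
    · exact h
    · exact absurd h this
  · rw [skewSchurEval, hset, finsum_mem_coe_finset]
    have : ∀ T ∈ hfin.toFinset, (∏ i : Fin n, (1 : ℂ) ^ T.wt ((i : ℕ) + 1)) = 1 := by
      intro T _
      simp
    rw [Finset.sum_congr rfl this, Finset.sum_const, nsmul_eq_mul, mul_one]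
    congr 1
    exact ((Nat.card_coe_set_eq _).trans (Set.ncard_coe_finset _)).symm
end
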